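/- Suppose (𝒱, ⊗, I) = (𝒱, ×, 1) and 𝒱 is cartesian closed. Let 𝒯 = (Σ, ℰ) be a 𝒱-enriched 𝒮-sorted equational theory, let X be an object of 𝒱^𝒮, and let ∼^ℰ be the Σ-congruence on the free Σ-algebra F^Σ X generated by ℰ. Then the quotient Σ-algebra F^Σ X/∼^ℰ, together with the unit X → U^𝒯(F^Σ X/∼^ℰ) given by composing the unit of F^Σ ⊣ U^Σ with the quotient morphism, is the free 𝒯-algebra on X: for every 𝒯-algebra A and every 𝒱^𝒮-morphism f : X → U^𝒯 A there is a unique Σ-algebra morphism f^♯ : F^Σ X/∼^ℰ → A with f^♯ ∘ η = f. -/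

import Mathlib

universe u

/-- A topological construct over `Set`: an amnestic concrete category over types,
presented by a class of structures on each type together with an admissibility
predicate on functions, in which every structured source has an initial lift and
every structured sink has a final lift (index types in `Type (u+1)` suffice for
all the "large" sources/sinks we consider). -/
structure TopConstruct : Type (u + 2) where
  Str : Type u → Type (u + 1)
  Adm : ∀ {X Y : Type u}, Str X → Str Y → (X → Y) → Prop
  adm_id : ∀ {X : Type u} (s : Str X), Adm s s id
  adm_comp : ∀ {X Y Z : Type u} {s : Str X} {t : Str Y} {r : Str Z} {f : X → Y} {g : Y → Z},
    Adm s t f → Adm t r g → Adm s r (g ∘ f)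
  amnestic : ∀ {X : Type u} (s t : Str X), Adm s t id → Adm t s id → s = t
  iLift : ∀ {X : Type u} {I : Type (u + 1)} (T : I → Type u) (t : ∀ i, Str (T i))
    (f : ∀ i, X → T i), Str X
  iLift_adm : ∀ {X : Type u} {I : Type (u + 1)} (T : I → Type u) (t : ∀ i, Str (T i))
    (f : ∀ i, X → T i) (i : I), Adm (iLift T t f) (t i) (f i)
  iLift_initial : ∀ {X : Type u} {I : Type (u + 1)} (T : I → Type u) (t : ∀ i, Str (T i))
    (f : ∀ i, X → T i) {W : Type u} (w : Str W) (g : W → X),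
    (∀ i, Adm w (t i) (fun x => f i (g x))) → Adm w (iLift T t f) g
  fLift : ∀ {X : Type u} {I : Type (u + 1)} (T : I → Type u) (t : ∀ i, Str (T i))
    (f : ∀ i, T i → X), Str X
  fLift_adm : ∀ {X : Type u} {I : Type (u + 1)} (T : I → Type u) (t : ∀ i, Str (T i))
    (f : ∀ i, T i → X) (i : I), Adm (t i) (fLift T t f) (f i)
  fLift_final : ∀ {X : Type u} {I : Type (u + 1)} (T : I → Type u) (t : ∀ i, Str (T i))
    (f : ∀ i, T i → X) {W : Type u} (w : Str W) (g : X → W),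
    (∀ i, Adm (t i) w (fun x => g (f i x))) → Adm (fLift T t f) w g

namespace TopConstruct

variable (V : TopConstruct.{u})

/-- The objects of the topological category `V`. -/
def Obj : Type (u + 1) := Σ X : Type u, V.Str X

/-- The fibre (partial) order over a fixed underlying set. -/
def fibLe {X : Type u} (s t : V.Str X) : Prop := V.Adm s t id

/-- Infima in the fibres (initial lift of a structured source of identities). -/
def fibInf {X : Type u} {I : Type (u + 1)} (s : I → V.Str X) : V.Str X :=
  V.iLift (fun _ => X) s fun _ => id

/-- Suprema in the fibres (final lift of a structured sink of identities). -/
def fibSup {X : Type u} {I : Type (u + 1)} (s : I → V.Str X) : V.Str X :=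
  V.fLift (fun _ => X) s fun _ => id

/-- Binary suprema in the fibres. -/
def fibSup2 {X : Type u} (s t : V.Str X) : V.Str X :=
  V.fibSup fun b : ULift.{u + 1} Bool => bif b.down then s else t

/-- Initial lift of a single structured map. -/
def iLift1 {X Y : Type u} (t : V.Str Y) (f : X → Y) : V.Str X :=
  V.iLift (I := PUnit.{u + 2}) (fun _ => Y) (fun _ => t) fun _ => f

/-- Final lift of a single structured map. -/
def fLift1 {X Y : Type u} (t : V.Str X) (f : X → Y) : V.Str Y :=
  V.fLift (I := PUnit.{u + 2}) (fun _ => X) (fun _ => t) fun _ => f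

/-- The indiscrete structure (top of the fibre). -/
def indisc (X : Type u) : V.Str X :=
  V.iLift (I := PEmpty.{u + 2}) (fun e => e.elim) (fun e => e.elim) fun e => e.elim

/-- The discrete structure (bottom of the fibre). -/
def disc (X : Type u) : V.Str X :=
  V.fLift (I := PEmpty.{u + 2}) (fun e => e.elim) (fun e => e.elim) fun e => e.elim

/-- The product structure on a finitely-indexed (or any `Type 0`-indexed) family. -/
def piStrF {I : Type} {T : I → Type u} (t : ∀ i, V.Str (T i)) : V.Str (∀ i, T i) :=
  V.iLift (I := ULift.{u + 1} I) (fun i => T i.down) (fun i => t i.down) fun i g => g i.down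

/-- The product structure on a `Type u`-indexed family. -/
def piStrU {I : Type u} {T : I → Type u} (t : ∀ i, V.Str (T i)) : V.Str (∀ i, T i) :=
  V.iLift (I := ULift.{u + 1} I) (fun i => T i.down) (fun i => t i.down) fun i g => g i.down

/-- The binary (cartesian) product structure. -/
def prodStr {X Y : Type u} (s : V.Str X) (t : V.Str Y) : V.Str (X × Y) :=
  V.iLift (I := ULift.{u + 1} Bool) (fun b => Bool.rec Y X b.down)
    (fun b => Bool.rec (motive := fun c => V.Str (Bool.rec Y X c)) t s b.down)
    (fun b => Bool.rec (motive := fun c => X × Y → Bool.rec Y X c) Prod.snd Prod.fst b.down)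

end TopConstruct

/-- Cartesian closedness of a topological construct, witnessed concretely:
each hom-set carries an exponential structure for which admissibility of a map
into the exponential is equivalent to admissibility of its uncurrying. -/
structure CartesianClosed (V : TopConstruct.{u}) : Type (u + 1) where
  exp : ∀ {X Y : Type u} (s : V.Str X) (t : V.Str Y), V.Str {f : X → Y // V.Adm s t f}
  adm_curry_iff : ∀ {X Y Z : Type u} (s : V.Str X) (t : V.Str Y) (c : V.Str Z)
    (g : Z → {f : X → Y // V.Adm s t f}),
    V.Adm c (exp s t) g ↔ V.Adm (V.prodStr c s) t fun p => (g p.1).1 p.2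

/-- A symmetric monoidal structure on a topological construct `V` for which the
forgetful functor to `Set` is strict symmetric monoidal with respect to the
cartesian structure on `Set`. -/
structure MonStr (V : TopConstruct.{u}) : Type (u + 1) where
  tens : ∀ {X Y : Type u}, V.Str X → V.Str Y → V.Str (X × Y)
  unitStr : V.Str PUnit.{u + 1}
  tens_adm : ∀ {X X' Y Y' : Type u} {s : V.Str X} {s' : V.Str X'} {t : V.Str Y} {t' : V.Str Y'}
    {f : X → X'} {g : Y → Y'}, V.Adm s s' f → V.Adm t t' g →
    V.Adm (tens s t) (tens s' t') (Prod.map f g)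
  swap_adm : ∀ {X Y : Type u} (s : V.Str X) (t : V.Str Y), V.Adm (tens s t) (tens t s) Prod.swap
  assoc_adm : ∀ {X Y Z : Type u} (s : V.Str X) (t : V.Str Y) (r : V.Str Z),
    V.Adm (tens (tens s t) r) (tens s (tens t r)) fun p => (p.1.1, (p.1.2, p.2))
  assoc_inv_adm : ∀ {X Y Z : Type u} (s : V.Str X) (t : V.Str Y) (r : V.Str Z),
    V.Adm (tens s (tens t r)) (tens (tens s t) r) fun p => ((p.1, p.2.1), p.2.2)
  lunit_adm : ∀ {X : Type u} (s : V.Str X), V.Adm (tens unitStr s) s Prod.snd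
  lunit_inv_adm : ∀ {X : Type u} (s : V.Str X), V.Adm s (tens unitStr s) fun x => (PUnit.unit, x)
  runit_adm : ∀ {X : Type u} (s : V.Str X), V.Adm (tens s unitStr) s Prod.fst
  runit_inv_adm : ∀ {X : Type u} (s : V.Str X), V.Adm s (tens s unitStr) fun x => (x, PUnit.unit)

/-- The statement that the symmetric monoidal structure `M` is the cartesian one. -/
def MonStr.IsCartesian {V : TopConstruct.{u}} (M : MonStr V) : Prop :=
  (∀ {X Y : Type u} (s : V.Str X) (t : V.Str Y), M.tens s t = V.prodStr s t) ∧
    M.unitStr = V.indisc PUnit.{u + 1}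
universe v

/-- A classical `S`-sorted signature. -/
structure ClassSig (S : Type u) : Type (u + 1) where
  Op : Type u
  ar : Op → List S
  out : Op → S

/-- A classical `S`-sorted algebra (in `Set`) for a classical signature. -/
structure ClassAlg {S : Type u} (Sg : ClassSig S) : Type (u + 1) where
  car : S → Type u
  op : ∀ σ : Sg.Op, (∀ i : Fin (Sg.ar σ).length, car ((Sg.ar σ).get i)) → car (Sg.out σ)

/-- A morphism of classical algebras. -/
def IsClsHom {S : Type u} {Sg : ClassSig S} (A B : ClassAlg Sg)
    (h : ∀ s, A.car s → B.car s) : Prop :=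
  ∀ (σ : Sg.Op) (ts : ∀ i : Fin (Sg.ar σ).length, A.car ((Sg.ar σ).get i)),
    h _ (A.op σ ts) = B.op σ fun i => h _ (ts i)

/-- Ground terms over a classical signature with constants from `X`. -/
inductive Tm {S : Type u} (Sg : ClassSig S) (X : S → Type v) : S → Type (max u v)
  | var {s : S} : X s → Tm Sg X s
  | app (σ : Sg.Op) (ts : ∀ i : Fin (Sg.ar σ).length, Tm Sg X ((Sg.ar σ).get i)) :
      Tm Sg X (Sg.out σ)

/-- The term algebra (the free classical algebra) on an `S`-sorted set. -/
def termAlg {S : Type u} (Sg : ClassSig S) (X : S → Type u) : ClassAlg Sg :=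
  ⟨Tm Sg X, fun σ ts => .app σ ts⟩

/-- The unique extension of `f` to a homomorphism out of the term algebra
(the adjoint transpose `f^♯`). -/
def Tm.extend {S : Type u} {Sg : ClassSig S} {X : S → Type v} (B : ClassAlg Sg)
    (f : ∀ s, X s → B.car s) : ∀ {s : S}, Tm Sg X s → B.car s
  | _, .var x => f _ x
  | _, .app σ ts => B.op σ fun i => Tm.extend B f (ts i)

/-- Variables of a context: positions of the context list of the given sort. -/
def CtxVar {S : Type u} (Γ : List S) (s : S) : Type := {i : Fin Γ.length // Γ.get i = s}

/-- A syntactic equation in context over a classical signature. -/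
structure SynEq {S : Type u} (Sg : ClassSig S) : Type u where
  ctx : List S
  sort : S
  lhs : Tm Sg (CtxVar ctx) sort
  rhs : Tm Sg (CtxVar ctx) sort

/-- Interpretation of a term in context in a classical algebra at a valuation. -/
def ctxInterp {S : Type u} {Sg : ClassSig S} (B : ClassAlg Sg) {Γ : List S} {s : S}
    (t : Tm Sg (CtxVar Γ) s) (as : ∀ i : Fin Γ.length, B.car (Γ.get i)) : B.car s :=
  Tm.extend (X := CtxVar Γ) B (fun _ x => x.2 ▸ as x.1) t

/-- Satisfaction of a syntactic equation in context by a classical algebra. -/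
def ClsSat {S : Type u} {Sg : ClassSig S} (B : ClassAlg Sg) (e : SynEq Sg) : Prop :=
  ∀ as : ∀ i : Fin e.ctx.length, B.car (e.ctx.get i),
    ctxInterp B e.lhs as = ctxInterp B e.rhs as

/-- A congruence on a classical algebra. -/
def IsClsCong {S : Type u} {Sg : ClassSig S} (B : ClassAlg Sg)
    (r : ∀ s, B.car s → B.car s → Prop) : Prop :=
  (∀ s, Equivalence (r s)) ∧
    ∀ (σ : Sg.Op) (ts us : ∀ i : Fin (Sg.ar σ).length, B.car ((Sg.ar σ).get i)),
      (∀ i, r _ (ts i) (us i)) → r _ (B.op σ ts) (B.op σ us)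

/-- The congruence on a classical algebra generated by a set of syntactic
equations in context: the smallest congruence identifying the interpretations
of the two sides of each equation at all valuations. -/
def congGen {S : Type u} {Sg : ClassSig S} (B : ClassAlg Sg) (E : Set (SynEq Sg)) :
    ∀ s, B.car s → B.car s → Prop := fun s a b =>
  ∀ r : ∀ s, B.car s → B.car s → Prop, IsClsCong B r →
    (∀ e ∈ E, ∀ as, r e.sort (ctxInterp B e.lhs as) (ctxInterp B e.rhs as)) → r s a b

/-- A `V`-enriched `S`-sorted signature: operation symbols with input sorts,
an output sort and a parameter object of `V`. -/
structure VSig (V : TopConstruct.{u}) (S : Type u) : Type (u + 1) where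
  Op : Type u
  ar : Op → List S
  out : Op → S
  parC : Op → Type u
  parS : ∀ σ, V.Str (parC σ)

/-- The underlying classical `S`-sorted signature `|Σ|` of a `V`-enriched one:
one operation symbol `σ_p` for every `σ` and every point `p` of its parameter. -/
def VSig.toClass {V : TopConstruct.{u}} {S : Type u} (Sg : VSig V S) : ClassSig S where
  Op := Σ σ : Sg.Op, Sg.parC σ
  ar := fun σ => Sg.ar σ.1
  out := fun σ => Sg.out σ.1

/-- A `Σ`-algebra for a `V`-enriched `S`-sorted signature (relative to a
symmetric monoidal structure `M` on `V`): an `S`-sorted object of `V` equipped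
with an admissible operation `P ⊗ (A_{S₁} × ⋯ × A_{Sₙ}) → A_S` for each `σ`. -/
structure VAlg (V : TopConstruct.{u}) (M : MonStr V) {S : Type u} (Sg : VSig V S) :
    Type (u + 1) where
  car : S → Type u
  str : ∀ s, V.Str (car s)
  op : ∀ σ : Sg.Op,
    Sg.parC σ × (∀ i : Fin (Sg.ar σ).length, car ((Sg.ar σ).get i)) → car (Sg.out σ)
  op_adm : ∀ σ : Sg.Op,
    V.Adm (M.tens (Sg.parS σ) (V.piStrF fun i => str ((Sg.ar σ).get i))) (str (Sg.out σ)) (op σ)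

/-- The underlying classical `|Σ|`-algebra of a `Σ`-algebra. -/
def VAlg.cls {V : TopConstruct.{u}} {M : MonStr V} {S : Type u} {Sg : VSig V S}
    (A : VAlg V M Sg) : ClassAlg Sg.toClass :=
  ⟨A.car, fun σ ts => A.op σ.1 (σ.2, ts)⟩

/-- A morphism of `Σ`-algebras: an `S`-sorted admissible family commuting with
all the operations. -/
def IsVHom {V : TopConstruct.{u}} {M : MonStr V} {S : Type u} {Sg : VSig V S}
    (A B : VAlg V M Sg) (h : ∀ s, A.car s → B.car s) : Prop :=
  (∀ s, V.Adm (A.str s) (B.str s) (h s)) ∧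
    ∀ (σ : Sg.Op) (p : Sg.parC σ) (ts : ∀ i : Fin (Sg.ar σ).length, A.car ((Sg.ar σ).get i)),
      h _ (A.op σ (p, ts)) = B.op σ (p, fun i => h _ (ts i))
/-- The components of a candidate algebraic `Σ`-operation with input sorts
`ins`, output sort `o` and parameter carrier `P`. -/
def OpFam (V : TopConstruct.{u}) (M : MonStr V) {S : Type u} (Sg : VSig V S)
    (ins : List S) (o : S) (P : Type u) : Type (u + 1) :=
  ∀ A : VAlg V M Sg, P × (∀ i : Fin ins.length, A.car (ins.get i)) → A.car o

/-- Admissibility of all components of a candidate algebraic `Σ`-operation. -/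
def OpAdm {V : TopConstruct.{u}} {M : MonStr V} {S : Type u} {Sg : VSig V S}
    {ins : List S} {o : S} {P : Type u} (pS : V.Str P) (ω : OpFam V M Sg ins o P) : Prop :=
  ∀ A : VAlg V M Sg,
    V.Adm (M.tens pS (V.piStrF fun i => A.str (ins.get i))) (A.str o) (ω A)

/-- Naturality of a candidate algebraic `Σ`-operation. -/
def OpNat {V : TopConstruct.{u}} {M : MonStr V} {S : Type u} {Sg : VSig V S}
    {ins : List S} {o : S} {P : Type u} (ω : OpFam V M Sg ins o P) : Prop :=
  ∀ (A B : VAlg V M Sg) (h : ∀ s, A.car s → B.car s), IsVHom A B h →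
    ∀ (p : P) (ts : ∀ i : Fin ins.length, A.car (ins.get i)),
      h o (ω A (p, ts)) = ω B (p, fun i => h _ (ts i))

/-- An algebraic `Σ`-equation: a pair of algebraic `Σ`-operations
(natural transformations `P ⊗ U^{S̄} ⟹ U^S`) of the same type. -/
structure AlgEq (V : TopConstruct.{u}) (M : MonStr V) {S : Type u} (Sg : VSig V S) :
    Type (u + 1) where
  ins : List S
  out : S
  parC : Type u
  parS : V.Str parC
  lhs : OpFam V M Sg ins out parC
  rhs : OpFam V M Sg ins out parC
  lhs_adm : OpAdm parS lhs
  rhs_adm : OpAdm parS rhs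
  lhs_nat : OpNat lhs
  rhs_nat : OpNat rhs

/-- Satisfaction of an algebraic `Σ`-equation by a `Σ`-algebra. -/
def VSat {V : TopConstruct.{u}} {M : MonStr V} {S : Type u} {Sg : VSig V S}
    (A : VAlg V M Sg) (e : AlgEq V M Sg) : Prop :=
  e.lhs A = e.rhs A

/-- The indiscrete `Σ`-algebra determined by a classical `|Σ|`-algebra. -/
def indiscAlg (V : TopConstruct.{u}) (M : MonStr V) {S : Type u} (Sg : VSig V S)
    (B : ClassAlg Sg.toClass) : VAlg V M Sg where
  car := B.car
  str := fun s => V.indisc (B.car s)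
  op := fun σ pts => B.op ⟨σ, pts.1⟩ pts.2
  op_adm := fun σ => V.iLift_initial _ _ _ _ _ fun i => i.elim
theorem extend_hom {S : Type u} {Sg : ClassSig S} {B C : ClassAlg Sg} {h : ∀ s, B.car s → C.car s}
    (hh : IsClsHom B C h) {X : S → Type v} (f : ∀ s, X s → B.car s) {s : S} (t : Tm Sg X s) :
    h s (Tm.extend B f t) = Tm.extend C (fun s x => h s (f s x)) t := by
  induction t with
  | var x => rfl
  | app σ ts ih =>
    show h _ (B.op σ _) = C.op σ _
    rw [hh σ]
    exact congrArg _ (funext fun i => ih i)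

theorem interp_hom {S : Type u} {Sg : ClassSig S} {B C : ClassAlg Sg} {h : ∀ s, B.car s → C.car s}
    (hh : IsClsHom B C h) {Γ : List S} {s : S} (t : Tm Sg (CtxVar Γ) s)
    (as : ∀ i : Fin Γ.length, B.car (Γ.get i)) :
    h s (ctxInterp B t as) = ctxInterp C t (fun i => h _ (as i)) := by
  unfold ctxInterp
  rw [extend_hom hh]
  congr 1
  funext s x
  obtain ⟨i, hi⟩ := x
  subst hi
  rfl

/-- Suppose `(𝒱, ⊗, I) = (𝒱, ×, 1)` and `𝒱` is cartesian closed.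
Let `𝒯 = (Σ, ℰ)` be a `𝒱`-enriched `𝒮`-sorted equational theory (with underlying
classical equations `|ℰ| = E'`), let `X` be an object of `𝒱^𝒮`, let `F^Σ X` be
the free `Σ`-algebra on `X` (hypothesized via its universal property), and let
`∼^ℰ` be the `Σ`-congruence on `F^Σ X` generated by `ℰ`.  Then the quotient
`Σ`-algebra `F^Σ X/∼^ℰ`, with unit `X → U^𝒯(F^Σ X/∼^ℰ)` the composite of the
unit of `F^Σ ⊣ U^Σ` with the quotient morphism, is the free `𝒯`-algebra on `X`:
the unit is admissible, and for every `𝒯`-algebra `A` and `𝒱^𝒮`-morphism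
`f : X → U^𝒯 A` there is a unique morphism of `Σ`-algebras
`f^♯ : F^Σ X/∼^ℰ → A` with `f^♯ ∘ η = f`. -/
theorem statement17 (V : TopConstruct.{u}) (M : MonStr V) (hM : M.IsCartesian)
    (cc : CartesianClosed V) {S : Type u} (Sg : VSig V S)
    (E : Set (AlgEq V M Sg)) (E' : Set (SynEq Sg.toClass))
    (hE' : ∀ A : VAlg V M Sg, (∀ e ∈ E, VSat A e) ↔ ∀ e' ∈ E', ClsSat A.cls e')
    (X : S → V.Obj)
    -- the free `Σ`-algebra `F^Σ X` on `X`, with unit `η`: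
    (FA : VAlg V M Sg) (η : ∀ s, (X s).1 → FA.car s)
    (hη : ∀ s, V.Adm (X s).2 (FA.str s) (η s))
    (hfree : ∀ (A : VAlg V M Sg) (f : ∀ s, (X s).1 → A.car s),
      (∀ s, V.Adm (X s).2 (A.str s) (f s)) →
      ∃! h : ∀ s, FA.car s → A.car s, IsVHom FA A h ∧ ∀ s x, h s (η s x) = f s x)
    -- the quotient `Σ`-algebra `F^Σ X/∼^ℰ`, where `∼^ℰ = congGen FA.cls E'`:
    (qop : ∀ σ : Sg.Op,
      Sg.parC σ ×
        (∀ i : Fin (Sg.ar σ).length, Quot (congGen FA.cls E' ((Sg.ar σ).get i))) →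
        Quot (congGen FA.cls E' (Sg.out σ)))
    (hq : ∀ (σ : Sg.Op) (p : Sg.parC σ) ts,
      qop σ (p, fun i => Quot.mk _ (ts i)) = Quot.mk _ (FA.op σ (p, ts)))
    (hqadm : ∀ σ : Sg.Op,
      V.Adm (M.tens (Sg.parS σ)
          (V.piStrF fun i => V.fLift1 (FA.str ((Sg.ar σ).get i)) (Quot.mk _)))
        (V.fLift1 (FA.str (Sg.out σ)) (Quot.mk _)) (qop σ)) :
    -- the unit `X → U^𝒯 (F^Σ X/∼^ℰ)` is admissible ...
    (∀ s, V.Adm (X s).2 (V.fLift1 (FA.str s) (Quot.mk (congGen FA.cls E' s)))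
      fun x => Quot.mk (congGen FA.cls E' s) (η s x)) ∧
    -- ... and universal: `F^Σ X/∼^ℰ` is the free `𝒯`-algebra on `X`
    ∀ (A : VAlg V M Sg), (∀ e ∈ E, VSat A e) →
      ∀ f : ∀ s, (X s).1 → A.car s, (∀ s, V.Adm (X s).2 (A.str s) (f s)) →
      ∃! h : ∀ s, Quot (congGen FA.cls E' s) → A.car s,
        (∀ s, V.Adm (V.fLift1 (FA.str s) (Quot.mk (congGen FA.cls E' s))) (A.str s) (h s)) ∧
        (∀ (σ : Sg.Op) (p : Sg.parC σ) ts,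
          h _ (qop σ (p, ts)) = A.op σ (p, fun i => h _ (ts i))) ∧
        ∀ s x, h s (Quot.mk (congGen FA.cls E' s) (η s x)) = f s x := by
  constructor
  · intro s
    exact V.adm_comp (hη s) (V.fLift_adm (fun _ => FA.car s) (fun _ => FA.str s) (fun _ => Quot.mk _) PUnit.unit)
  · intro A hA f hf
    obtain ⟨g, ⟨hgH, hgη⟩, hguniq⟩ := hfree A f hf
    -- g is a classical hom FA.cls → A.cls
    have hgcls : IsClsHom FA.cls A.cls g := by
      intro σ ts
      exact hgH.2 σ.1 σ.2 ts
    -- the relation identified by g contains the generated congruence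
    have hle : ∀ s a b, congGen FA.cls E' s a b → g s a = g s b := by
      intro s a b hab
      refine hab (fun s a b => g s a = g s b) ⟨fun s => ⟨fun _ => rfl, Eq.symm, Eq.trans⟩,
        fun σ ts us h => ?_⟩ ?_
      · show g _ (FA.cls.op σ ts) = g _ (FA.cls.op σ us)
        rw [hgcls σ ts, hgcls σ us]
        exact congrArg _ (funext h)
      · intro e he as
        rw [interp_hom hgcls, interp_hom hgcls]
        exact (hE' A).mp hA e he _
    -- lift g to the quotient
    refine ⟨fun s => Quot.lift (g s) (hle s), ⟨?_, ?_, ?_⟩, ?_⟩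
    · intro s
      exact V.fLift_final _ _ _ _ _ fun _ => hgH.1 s
    · intro σ p ts
      have : ∀ i, ∃ u, Quot.mk _ u = ts i := fun i => Quot.exists_rep (ts i)
      choose us hus using this
      have hts : ts = fun i => Quot.mk _ (us i) := funext fun i => (hus i).symm
      rw [hts, hq σ p us]
      show g _ (FA.op σ (p, us)) = _
      rw [hgH.2 σ p us]
    · intro s x
      exact hgη s x
    · -- uniqueness
      intro h' ⟨h'adm, h'op, h'η⟩
      have hg' : IsVHom FA A (fun s => h' s ∘ Quot.mk _) := by
        constructor
        · intro s
          exact V.adm_comp (V.fLift_adm (fun _ => FA.car s) (fun _ => FA.str s) (fun _ => Quot.mk _) PUnit.unit) (h'adm s)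
        · intro σ p ts
          show h' _ (Quot.mk _ (FA.op σ (p, ts))) = _
          exact (congrArg (h' _) (hq σ p ts)).symm.trans (h'op σ p _)
      have := hguniq (fun s => h' s ∘ Quot.mk _) ⟨hg', fun s x => h'η s x⟩
      funext s x
      induction x using Quot.ind with
      | _ a => exact congrFun (congrFun this s) a
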